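/- Let (𝒜, φ) be a non-commutative probability space, σ ∈ NC(n) a non-crossing partition, and a₁,...,a_n ∈ 𝒜. Then φ_σ[a₁,...,a_n] = Σ_{π ∈ NC(n), π ≤ σ} k_π[a₁,...,a_n], where the sum is over non-crossing partitions refining σ. -/
import Mathlib


open scoped Classical


open scoped Classical

def NoCrossing {N : ℕ} (π : Finset (Finset (Fin N))) : Prop :=
  ¬ ∃ p1 q1 p2 q2 : Fin N, p1 < q1 ∧ q1 < p2 ∧ p2 < q2 ∧
      (∃ V ∈ π, p1 ∈ V ∧ p2 ∈ V) ∧ (∃ W ∈ π, q1 ∈ W ∧ q2 ∈ W) ∧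
      ¬(∃ V ∈ π, p1 ∈ V ∧ q1 ∈ V)

def IsPartition {N : ℕ} (π : Finset (Finset (Fin N))) : Prop :=
  (∀ V ∈ π, V.Nonempty) ∧ ∀ i : Fin N, ∃! V, V ∈ π ∧ i ∈ V

noncomputable def NCPartitions (N : ℕ) : Finset (Finset (Finset (Fin N))) :=
  Finset.univ.filter fun π => IsPartition π ∧ NoCrossing π

noncomputable def cumProd {A : Type*} [Ring A] (k : ∀ n : ℕ, (Fin n → A) → ℂ)
    {N : ℕ} (π : Finset (Finset (Fin N))) (a : Fin N → A) : ℂ :=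
  ∏ V ∈ π, k V.card (fun i => a (V.orderEmbOfFin rfl i))

def MomentCumulant {A : Type*} [Ring A] [Algebra ℂ A] (φ : A →ₗ[ℂ] ℂ)
    (k : ∀ n : ℕ, (Fin n → A) → ℂ) : Prop :=
  ∀ (N : ℕ) (a : Fin N → A), φ (List.ofFn a).prod = ∑ π ∈ NCPartitions N, cumProd k π a

def FreeFamily {A : Type*} [Ring A] [Algebra ℂ A] (φ : A →ₗ[ℂ] ℂ)
    {ι : Type*} (S : ι → Subalgebra ℂ A) : Prop :=
  ∀ (len : ℕ) (a : Fin len → A) (j : Fin len → ι),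
    (∀ i, a i ∈ S (j i)) →
    (∀ (i : ℕ) (h1 : i + 1 < len), j ⟨i, by omega⟩ ≠ j ⟨i + 1, h1⟩) →
    (∀ i, φ (a i) = 0) →
    φ (List.ofFn a).prod = 0

/-- The product of moments according to the blocks of a partition. -/
noncomputable def momProd {A : Type*} [Ring A] [Algebra ℂ A] (φ : A →ₗ[ℂ] ℂ)
    {N : ℕ} (π : Finset (Finset (Fin N))) (a : Fin N → A) : ℂ :=
  ∏ V ∈ π, φ (List.ofFn (fun i => a (V.orderEmbOfFin rfl i))).prod


section Aux

variable {n : ℕ}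

private lemma mem_NCP {N : ℕ} {π : Finset (Finset (Fin N))} :
    π ∈ NCPartitions N ↔ IsPartition π ∧ NoCrossing π := by
  simp [NCPartitions]

private lemma part_eq {N : ℕ} {π : Finset (Finset (Fin N))} (h : IsPartition π)
    {V1 V2 : Finset (Fin N)} (h1 : V1 ∈ π) (h2 : V2 ∈ π) {x : Fin N}
    (hx1 : x ∈ V1) (hx2 : x ∈ V2) : V1 = V2 := by
  obtain ⟨V, -, hu⟩ := h.2 x
  rw [hu V1 ⟨h1, hx1⟩, hu V2 ⟨h2, hx2⟩]

private lemma emb_mem (W : Finset (Fin n)) (i : Fin W.card) : W.orderEmbOfFin rfl i ∈ W :=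
  Finset.orderEmbOfFin_mem _ _ _

private lemma emb_surj (W : Finset (Fin n)) {x : Fin n} (hx : x ∈ W) :
    ∃ i, W.orderEmbOfFin rfl i = x := by
  have : x ∈ Set.range (W.orderEmbOfFin rfl) := by
    rw [Finset.range_orderEmbOfFin]; exact hx
  exact this

private def push (W : Finset (Fin n)) (B : Finset (Fin W.card)) : Finset (Fin n) :=
  B.image (W.orderEmbOfFin rfl)

private lemma mem_push {W : Finset (Fin n)} {B : Finset (Fin W.card)} {x : Fin n} :
    x ∈ push W B ↔ ∃ i ∈ B, W.orderEmbOfFin rfl i = x := Finset.mem_image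

private lemma push_subset (W : Finset (Fin n)) (B : Finset (Fin W.card)) :
    push W B ⊆ W := fun x hx => by
  obtain ⟨i, -, rfl⟩ := mem_push.1 hx; exact emb_mem W i

private lemma push_inj (W : Finset (Fin n)) : Function.Injective (push W) :=
  Finset.image_injective (W.orderEmbOfFin rfl).injective

private lemma card_push (W : Finset (Fin n)) (B : Finset (Fin W.card)) :
    (push W B).card = B.card :=
  Finset.card_image_of_injective _ (W.orderEmbOfFin rfl).injective

private def pull (W : Finset (Fin n)) (V : Finset (Fin n)) : Finset (Fin W.card) :=
  Finset.univ.filter fun i => W.orderEmbOfFin rfl i ∈ V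

private lemma mem_pull {W V : Finset (Fin n)} {i : Fin W.card} :
    i ∈ pull W V ↔ W.orderEmbOfFin rfl i ∈ V := by simp [pull]

private lemma pull_push (W : Finset (Fin n)) (B : Finset (Fin W.card)) :
    pull W (push W B) = B := by
  ext i
  rw [mem_pull, mem_push]
  constructor
  · rintro ⟨j, hj, h⟩
    rwa [← (W.orderEmbOfFin rfl).injective h]
  · intro h; exact ⟨i, h, rfl⟩

private lemma push_pull {W V : Finset (Fin n)} (h : V ⊆ W) : push W (pull W V) = V := by
  ext x
  rw [mem_push]
  constructor
  · rintro ⟨i, hi, rfl⟩; exact mem_pull.1 hi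
  · intro hx; obtain ⟨i, rfl⟩ := emb_surj W (h hx); exact ⟨i, mem_pull.2 hx, rfl⟩

private lemma k_cast {A : Type*} [Ring A] (k : ∀ m : ℕ, (Fin m → A) → ℂ)
    (a : Fin n → A) (s : Finset (Fin n)) {m : ℕ} (h : s.card = m) :
    k s.card (fun i => a (s.orderEmbOfFin rfl i)) = k m (fun i => a (s.orderEmbOfFin h i)) := by
  subst h; rfl

private lemma cumTerm_push {A : Type*} [Ring A] (k : ∀ m : ℕ, (Fin m → A) → ℂ)
    (a : Fin n → A) (W : Finset (Fin n)) (B : Finset (Fin W.card)) :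
    k (push W B).card (fun i => a ((push W B).orderEmbOfFin rfl i)) =
      k B.card (fun i => a (W.orderEmbOfFin rfl (B.orderEmbOfFin rfl i))) := by
  have hc : (push W B).card = B.card := card_push W B
  have hf : (fun i : Fin B.card => W.orderEmbOfFin rfl (B.orderEmbOfFin rfl i)) =
      ⇑((push W B).orderEmbOfFin hc) := by
    apply Finset.orderEmbOfFin_unique
    · intro x; exact mem_push.2 ⟨_, Finset.orderEmbOfFin_mem B rfl x, rfl⟩
    · exact (W.orderEmbOfFin rfl).strictMono.comp (B.orderEmbOfFin rfl).strictMono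
  rw [k_cast k a _ hc]
  exact congrArg _ (funext fun i => congrArg a (congrFun hf.symm i))

private noncomputable def glue (σ : Finset (Finset (Fin n)))
    (p : ∀ W ∈ σ, Finset (Finset (Fin W.card))) : Finset (Finset (Fin n)) :=
  σ.attach.biUnion fun W => (p W.1 W.2).image (push W.1)

private lemma mem_glue {σ : Finset (Finset (Fin n))}
    {p : ∀ W ∈ σ, Finset (Finset (Fin W.card))} {V : Finset (Fin n)} :
    V ∈ glue σ p ↔ ∃ (W : Finset (Fin n)) (hW : W ∈ σ), ∃ B ∈ p W hW, push W B = V := by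
  constructor
  · intro h
    obtain ⟨⟨W, hW⟩, -, hV⟩ := Finset.mem_biUnion.1 h
    obtain ⟨B, hB, rfl⟩ := Finset.mem_image.1 hV
    exact ⟨W, hW, B, hB, rfl⟩
  · rintro ⟨W, hW, B, hB, rfl⟩
    exact Finset.mem_biUnion.2 ⟨⟨W, hW⟩, Finset.mem_attach _ _,
      Finset.mem_image.2 ⟨B, hB, rfl⟩⟩

private noncomputable def pullPart (W : Finset (Fin n)) (π : Finset (Finset (Fin n))) :
    Finset (Finset (Fin W.card)) :=
  (π.filter (· ⊆ W)).image (pull W)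

private lemma mem_pullPart {W : Finset (Fin n)} {π : Finset (Finset (Fin n))}
    {B : Finset (Fin W.card)} :
    B ∈ pullPart W π ↔ ∃ V ∈ π, V ⊆ W ∧ pull W V = B := by
  simp only [pullPart, Finset.mem_image, Finset.mem_filter]
  constructor
  · rintro ⟨V, ⟨hV, hVW⟩, rfl⟩; exact ⟨V, hV, hVW, rfl⟩
  · rintro ⟨V, hV, hVW, rfl⟩; exact ⟨V, ⟨hV, hVW⟩, rfl⟩

end Aux

section Main

variable {n : ℕ}

private lemma glue_isPartition {σ : Finset (Finset (Fin n))} (hσP : IsPartition σ)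
    {p : ∀ W ∈ σ, Finset (Finset (Fin W.card))}
    (hp : ∀ W (hW : W ∈ σ), IsPartition (p W hW)) : IsPartition (glue σ p) := by
  constructor
  · intro V hV
    obtain ⟨W, hW, B, hB, rfl⟩ := mem_glue.1 hV
    exact ((hp W hW).1 B hB).image _
  · intro i
    obtain ⟨W, ⟨hW, hiW⟩, hWu⟩ := hσP.2 i
    obtain ⟨x, rfl⟩ := emb_surj W hiW
    obtain ⟨B, ⟨hB, hxB⟩, hBu⟩ := (hp W hW).2 x
    refine ⟨push W B, ⟨mem_glue.2 ⟨W, hW, B, hB, rfl⟩, mem_push.2 ⟨x, hxB, rfl⟩⟩, ?_⟩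
    rintro V' ⟨hV', hiV'⟩
    obtain ⟨W', hW', B', hB', rfl⟩ := mem_glue.1 hV'
    have hWW : W' = W := hWu W' ⟨hW', push_subset W' B' hiV'⟩
    subst hWW
    obtain ⟨y, hyB', hy⟩ := mem_push.1 hiV'
    have : y = x := (W'.orderEmbOfFin rfl).injective hy
    subst this
    rw [hBu B' ⟨hB', hyB'⟩]

private lemma glue_refines {σ : Finset (Finset (Fin n))}
    {p : ∀ W ∈ σ, Finset (Finset (Fin W.card))} :
    ∀ V ∈ glue σ p, ∃ W ∈ σ, V ⊆ W := by
  intro V hV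
  obtain ⟨W, hW, B, hB, rfl⟩ := mem_glue.1 hV
  exact ⟨W, hW, push_subset W B⟩

private lemma glue_noCrossing {σ : Finset (Finset (Fin n))} (hσP : IsPartition σ)
    (hσN : NoCrossing σ) {p : ∀ W ∈ σ, Finset (Finset (Fin W.card))}
    (hp : ∀ W (hW : W ∈ σ), IsPartition (p W hW) ∧ NoCrossing (p W hW)) :
    NoCrossing (glue σ p) := by
  rintro ⟨p1, q1, p2, q2, h12, h23, h34, ⟨V1, hV1, hp1, hp2⟩, ⟨V2, hV2, hq1, hq2⟩, hno⟩
  obtain ⟨W1, hW1, B1, hB1, rfl⟩ := mem_glue.1 hV1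
  obtain ⟨W2, hW2, B2, hB2, rfl⟩ := mem_glue.1 hV2
  by_cases hWW : W1 = W2
  · subst hWW
    obtain ⟨x1, hx1, hex1⟩ := mem_push.1 hp1
    obtain ⟨x2, hx2, hex2⟩ := mem_push.1 hp2
    obtain ⟨y1, hy1, hey1⟩ := mem_push.1 hq1
    obtain ⟨y2, hy2, hey2⟩ := mem_push.1 hq2
    have hmono := (W1.orderEmbOfFin rfl).strictMono
    refine (hp W1 hW1).2 ⟨x1, y1, x2, y2, ?_, ?_, ?_, ⟨B1, hB1, hx1, hx2⟩,
      ⟨B2, hB2, hy1, hy2⟩, ?_⟩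
    · rw [← hmono.lt_iff_lt]; rw [hex1, hey1]; exact h12
    · rw [← hmono.lt_iff_lt]; rw [hey1, hex2]; exact h23
    · rw [← hmono.lt_iff_lt]; rw [hex2, hey2]; exact h34
    · rintro ⟨B, hB, hxB, hyB⟩
      refine hno ⟨push W1 B, mem_glue.2 ⟨W1, hW1, B, hB, rfl⟩, ?_, ?_⟩
      · exact mem_push.2 ⟨x1, hxB, hex1⟩
      · exact mem_push.2 ⟨y1, hyB, hey1⟩
  · refine hσN ⟨p1, q1, p2, q2, h12, h23, h34,
      ⟨W1, hW1, push_subset _ _ hp1, push_subset _ _ hp2⟩,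
      ⟨W2, hW2, push_subset _ _ hq1, push_subset _ _ hq2⟩, ?_⟩
    rintro ⟨U, hU, hpU, hqU⟩
    exact hWW ((part_eq hσP hW1 hU (push_subset _ _ hp1) hpU).trans
      (part_eq hσP hU hW2 hqU (push_subset _ _ hq1)))

private lemma pullPart_isPartition {σ : Finset (Finset (Fin n))} (hσP : IsPartition σ)
    {π : Finset (Finset (Fin n))} (hπP : IsPartition π)
    (hle : ∀ V ∈ π, ∃ W ∈ σ, V ⊆ W) {W : Finset (Fin n)} (hW : W ∈ σ) :
    IsPartition (pullPart W π) := by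
  constructor
  · intro B hB
    obtain ⟨V, hV, hVW, rfl⟩ := mem_pullPart.1 hB
    obtain ⟨x, hx⟩ := hπP.1 V hV
    obtain ⟨i, rfl⟩ := emb_surj W (hVW hx)
    exact ⟨i, mem_pull.2 hx⟩
  · intro i
    obtain ⟨V, ⟨hV, hiV⟩, hVu⟩ := hπP.2 (W.orderEmbOfFin rfl i)
    have hVW : V ⊆ W := by
      obtain ⟨W', hW', hVW'⟩ := hle V hV
      have : W' = W := part_eq hσP hW' hW (hVW' hiV) (emb_mem W i)
      exact this ▸ hVW'
    refine ⟨pull W V, ⟨mem_pullPart.2 ⟨V, hV, hVW, rfl⟩, mem_pull.2 hiV⟩, ?_⟩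
    rintro B' ⟨hB', hiB'⟩
    obtain ⟨V', hV', hV'W, rfl⟩ := mem_pullPart.1 hB'
    rw [hVu V' ⟨hV', mem_pull.1 hiB'⟩]

private lemma pullPart_noCrossing {σ : Finset (Finset (Fin n))} (hσP : IsPartition σ)
    {π : Finset (Finset (Fin n))} (hπN : NoCrossing π)
    (hle : ∀ V ∈ π, ∃ W ∈ σ, V ⊆ W) {W : Finset (Fin n)} (hW : W ∈ σ) :
    NoCrossing (pullPart W π) := by
  rintro ⟨x1, y1, x2, y2, h12, h23, h34, ⟨B1, hB1, hx1, hx2⟩, ⟨B2, hB2, hy1, hy2⟩, hno⟩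
  obtain ⟨V1, hV1, hV1W, rfl⟩ := mem_pullPart.1 hB1
  obtain ⟨V2, hV2, hV2W, rfl⟩ := mem_pullPart.1 hB2
  have hmono := (W.orderEmbOfFin rfl).strictMono
  refine hπN ⟨_, _, _, _, hmono h12, hmono h23, hmono h34,
    ⟨V1, hV1, mem_pull.1 hx1, mem_pull.1 hx2⟩,
    ⟨V2, hV2, mem_pull.1 hy1, mem_pull.1 hy2⟩, ?_⟩
  rintro ⟨V, hV, hxV, hyV⟩
  have hVW : V ⊆ W := by
    obtain ⟨W', hW', hVW'⟩ := hle V hV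
    have : W' = W := part_eq hσP hW' hW (hVW' hxV) (emb_mem W x1)
    exact this ▸ hVW'
  exact hno ⟨pull W V, mem_pullPart.2 ⟨V, hV, hVW, rfl⟩, mem_pull.2 hxV, mem_pull.2 hyV⟩

private lemma pullPart_glue {σ : Finset (Finset (Fin n))} (hσP : IsPartition σ)
    {p : ∀ W ∈ σ, Finset (Finset (Fin W.card))}
    (hp : ∀ W (hW : W ∈ σ), IsPartition (p W hW))
    {W : Finset (Fin n)} (hW : W ∈ σ) :
    pullPart W (glue σ p) = p W hW := by
  have hfil : (glue σ p).filter (· ⊆ W) = (p W hW).image (push W) := by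
    ext V
    simp only [Finset.mem_filter, Finset.mem_image]
    constructor
    · rintro ⟨hV, hVW⟩
      obtain ⟨W', hW', B', hB', rfl⟩ := mem_glue.1 hV
      obtain ⟨x, hx⟩ := (hp W' hW').1 B' hB'
      have hxV : W'.orderEmbOfFin rfl x ∈ push W' B' := mem_push.2 ⟨x, hx, rfl⟩
      have hWW : W' = W := part_eq hσP hW' hW (push_subset _ _ hxV) (hVW hxV)
      subst hWW
      exact ⟨B', hB', rfl⟩
    · rintro ⟨B, hB, rfl⟩
      exact ⟨mem_glue.2 ⟨W, hW, B, hB, rfl⟩, push_subset W B⟩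
  rw [pullPart, hfil, Finset.image_image]
  rw [show (pull W ∘ push W) = id from funext (pull_push W), Finset.image_id]

private lemma glue_pullPart {σ : Finset (Finset (Fin n))} (hσP : IsPartition σ)
    {π : Finset (Finset (Fin n))} (hle : ∀ V ∈ π, ∃ W ∈ σ, V ⊆ W) :
    glue σ (fun W _ => pullPart W π) = π := by
  ext V
  rw [mem_glue]
  constructor
  · rintro ⟨W, hW, B, hB, rfl⟩
    obtain ⟨V', hV', hV'W, rfl⟩ := mem_pullPart.1 hB
    rwa [push_pull hV'W]
  · intro hV
    obtain ⟨W, hW, hVW⟩ := hle V hV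
    exact ⟨W, hW, pull W V, mem_pullPart.2 ⟨V, hV, hVW, rfl⟩, push_pull hVW⟩

end Main

private lemma cumProd_glue {A : Type*} [Ring A] (k : ∀ m : ℕ, (Fin m → A) → ℂ)
    {n : ℕ} (a : Fin n → A) {σ : Finset (Finset (Fin n))} (hσP : IsPartition σ)
    {p : ∀ W ∈ σ, Finset (Finset (Fin W.card))}
    (hp : ∀ W (hW : W ∈ σ), IsPartition (p W hW)) :
    cumProd k (glue σ p) a =
      ∏ W ∈ σ.attach, cumProd k (p W.1 W.2) (fun i => a (W.1.orderEmbOfFin rfl i)) := by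
  have hdisj : ∀ x ∈ σ.attach, ∀ y ∈ σ.attach, x ≠ y →
      Disjoint ((p x.1 x.2).image (push x.1)) ((p y.1 y.2).image (push y.1)) := by
    rintro x - y - hxy
    rw [Finset.disjoint_left]
    rintro V hV1 hV2
    obtain ⟨B1, hB1, rfl⟩ := Finset.mem_image.1 hV1
    obtain ⟨B2, hB2, hB2e⟩ := Finset.mem_image.1 hV2
    obtain ⟨z, hz⟩ := ((hp x.1 x.2).1 B1 hB1).image (⇑(x.1.orderEmbOfFin rfl))
    have hzx : z ∈ x.1 := push_subset _ _ hz
    have hzy : z ∈ y.1 := push_subset _ _ (show z ∈ push y.1 B2 by rw [hB2e]; exact hz)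
    exact hxy (Subtype.ext (part_eq hσP x.2 y.2 hzx hzy))
  unfold cumProd glue
  rw [Finset.prod_biUnion hdisj]
  refine Finset.prod_congr rfl fun W _ => ?_
  rw [Finset.prod_image (fun x _ y _ h => push_inj W.1 h)]
  exact Finset.prod_congr rfl fun B _ => cumTerm_push k a W.1 B

/-- For any non-crossing partition σ, the σ-moment equals the sum of cumulant products
over all non-crossing partitions refining σ. -/
theorem momProd_eq_sum_cumProd {A : Type*} [Ring A] [Algebra ℂ A]
    (φ : A →ₗ[ℂ] ℂ) (hφ : φ 1 = 1)
    (k : ∀ n : ℕ, (Fin n → A) → ℂ) (hk : MomentCumulant φ k)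
    (n : ℕ) (σ : Finset (Finset (Fin n))) (hσ : σ ∈ NCPartitions n)
    (a : Fin n → A) :
    momProd φ σ a =
      ∑ π ∈ (NCPartitions n).filter (fun π => ∀ V ∈ π, ∃ W ∈ σ, V ⊆ W),
        cumProd k π a := by
  classical
  obtain ⟨hσP, hσN⟩ := mem_NCP.1 hσ
  have key : ∀ W ∈ σ, φ (List.ofFn fun i => a (W.orderEmbOfFin rfl i)).prod
      = ∑ ρ ∈ NCPartitions W.card, cumProd k ρ fun i => a (W.orderEmbOfFin rfl i) :=
    fun W _ => hk W.card _
  unfold momProd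
  rw [Finset.prod_congr rfl key, Finset.prod_sum]
  refine Finset.sum_nbij' (i := fun p => glue σ p) (j := fun π W _ => pullPart W π)
    ?_ ?_ ?_ ?_ ?_
  · intro p hp
    have hp' : ∀ W (hW : W ∈ σ), IsPartition (p W hW) ∧ NoCrossing (p W hW) :=
      fun W hW => mem_NCP.1 (Finset.mem_pi.1 hp W hW)
    rw [Finset.mem_filter]
    exact ⟨mem_NCP.2 ⟨glue_isPartition hσP (fun W hW => (hp' W hW).1),
      glue_noCrossing hσP hσN hp'⟩, glue_refines⟩
  · intro π hπ
    rw [Finset.mem_filter] at hπ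
    obtain ⟨hπ', hle⟩ := hπ
    obtain ⟨hπP, hπN⟩ := mem_NCP.1 hπ'
    rw [Finset.mem_pi]
    intro W hW
    exact mem_NCP.2 ⟨pullPart_isPartition hσP hπP hle hW,
      pullPart_noCrossing hσP hπN hle hW⟩
  · intro p hp
    have hp' : ∀ W (hW : W ∈ σ), IsPartition (p W hW) :=
      fun W hW => (mem_NCP.1 (Finset.mem_pi.1 hp W hW)).1
    funext W hW
    exact pullPart_glue hσP hp' hW
  · intro π hπ
    rw [Finset.mem_filter] at hπ
    exact glue_pullPart hσP hπ.2
  · intro p hp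
    have hp' : ∀ W (hW : W ∈ σ), IsPartition (p W hW) :=
      fun W hW => (mem_NCP.1 (Finset.mem_pi.1 hp W hW)).1
    exact (cumProd_glue k a hσP hp').symm
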